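/- For every integer m ≥ 1 and every integer n ≥ 0, the number of codewords of the Fibonacci code Fib m having length m + n equals F^{(m)}_{n+1}, where F^{(m)} denotes the sequence of Fibonacci numbers of order m defined by F^{(m)}_1 = 1, F^{(m)}_j = 0 for −m < j ≤ 0, and F^{(m)}_j = F^{(m)}_{j−1} + F^{(m)}_{j−2} + … + F^{(m)}_{j−m} for j > 1. (For example, Fib 2 has exactly one codeword of length 2, one of length 3, two of length 4, three of length 5, five of length 6, etc.) -/

import Mathlib

/-- The Fibonacci code of order `m`: all binary words having `1^m` as a suffix and
containing `1^m` as a substring only in that suffix position (this includes the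
word `1^m` itself). -/
def FibCode (m : ℕ) : Set (List Bool) :=
  {w | List.replicate m true <:+ w ∧
    ∀ u v, w = u ++ List.replicate m true ++ v → v = []}

namespace FibCodeAux

def C (m L : ℕ) : Set (List Bool) := {w ∈ FibCode m | w.length = L}

lemma C_finite (m L : ℕ) : (C m L).Finite :=
  (List.finite_length_eq Bool L).subset (fun _ hw => hw.2)

lemma replicate_mem (m : ℕ) : List.replicate m true ∈ FibCode m := by
  refine ⟨List.suffix_refl _, fun u v h => ?_⟩
  have hl := congrArg List.length h
  simp only [List.length_append, List.length_replicate] at hl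
  exact List.eq_nil_of_length_eq_zero (by omega)

lemma C_base (m : ℕ) : C m m = {List.replicate m true} := by
  ext w
  constructor
  · rintro ⟨⟨⟨t, ht⟩, _⟩, hlen⟩
    have hl := congrArg List.length ht
    simp only [List.length_append, List.length_replicate] at hl
    rw [hlen] at hl
    have ht0 : t = [] := List.eq_nil_of_length_eq_zero (by omega)
    subst ht0
    simpa using ht.symm
  · rintro rfl
    exact ⟨replicate_mem m, by simp⟩

lemma C_empty {m L : ℕ} (h : L < m) : C m L = ∅ := by
  ext w
  simp only [Set.mem_empty_iff_false, iff_false]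
  rintro ⟨⟨hsuf, _⟩, hlen⟩
  have := hsuf.length_le
  simp only [List.length_replicate] at this
  omega

lemma prepend_inj : ∀ (i j : ℕ) (a b : List Bool),
    List.replicate i true ++ false :: a = List.replicate j true ++ false :: b →
    i = j ∧ a = b := by
  intro i
  induction i with
  | zero =>
    intro j a b h
    cases j with
    | zero => simpa using h
    | succ j' => simp [List.replicate_succ] at h
  | succ i' ih =>
    intro j a b h
    cases j with
    | zero => simp [List.replicate_succ] at h
    | succ j' =>
      simp only [List.replicate_succ, List.cons_append, List.cons.injEq, true_and] at h
      obtain ⟨h1, h2⟩ := ih j' a b h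
      exact ⟨by omega, h2⟩

lemma drop_prepend (k : ℕ) (a : List Bool) :
    (List.replicate k true ++ false :: a).drop (k + 1) = a := by
  rw [List.drop_append]
  simp

/-- forward decomposition -/
lemma mem_decomp {m n : ℕ} (hm : 1 ≤ m) {w : List Bool} (hw : w ∈ C m (m + n + 1)) :
    ∃ k < m, ∃ w' ∈ C m (m + n - k), w = List.replicate k true ++ false :: w' := by
  obtain ⟨⟨hsuf, hocc⟩, hlen⟩ := hw
  -- w contains a false
  have hnotall : ¬ ∀ b ∈ w, b = true := by
    intro hall
    have : w = List.replicate (m + n + 1) true := by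
      rw [List.eq_replicate_iff]; exact ⟨hlen, hall⟩
    have h2 : w = [] ++ List.replicate m true ++ List.replicate (n + 1) true := by
      rw [this, List.nil_append, ← List.replicate_add]
      exact congrArg (fun t => List.replicate t true) (by omega)
    have := hocc _ _ h2
    simp at this
  set k := (w.takeWhile (· = true)).length with hk
  have htw : w.takeWhile (· = true) = List.replicate k true := by
    rw [List.eq_replicate_iff]
    refine ⟨rfl, fun b hb => ?_⟩
    have := List.mem_takeWhile_imp hb
    simpa using this
  have hdw_ne : w.dropWhile (· = true) ≠ [] := by
    intro hnil
    apply hnotall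
    intro b hb
    have := List.takeWhile_append_dropWhile (p := (· = true)) (l := w)
    rw [hnil, List.append_nil] at this
    rw [← this] at hb
    rw [htw] at hb
    exact List.eq_of_mem_replicate hb
  obtain ⟨c, w', hcw⟩ := List.exists_cons_of_ne_nil hdw_ne
  have hc : c = false := by
    have := List.head_dropWhile_not (· = true) (l := w) hdw_ne
    simp only [hcw, List.head_cons] at this
    simpa using this
  subst hc
  have hsplit : w = List.replicate k true ++ false :: w' := by
    conv_lhs => rw [← List.takeWhile_append_dropWhile (p := (· = true)) (l := w)]
    rw [htw, hcw]
  have hlen' : w.length = k + 1 + w'.length := by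
    rw [hsplit]; simp; omega
  -- k < m
  have hkm : k < m := by
    by_contra hge
    push_neg at hge
    have : w = [] ++ List.replicate m true ++ (List.replicate (k - m) true ++ false :: w') := by
      rw [List.nil_append, ← List.append_assoc, ← List.replicate_add]
      rw [show m + (k - m) = k by omega]
      exact hsplit
    have := hocc _ _ this
    simp at this
  -- suffix lives in w'
  obtain ⟨t, ht⟩ := hsuf
  have htlen : k + 1 ≤ t.length := by
    by_contra hlt
    push_neg at hlt
    have hklt : k < w.length := by omega
    have h1 : w[k]'hklt = false := by
      rw [List.getElem_of_eq hsplit]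
      rw [List.getElem_append_right (by simp)]
      simp
    have h2 : w[k]'hklt = true := by
      rw [List.getElem_of_eq ht.symm]
      rw [List.getElem_append_right (by omega)]
      simp
    rw [h1] at h2
    exact Bool.false_ne_true h2
  have hw'eq : w' = w.drop (k + 1) := by
    conv_rhs => rw [hsplit]
    rw [drop_prepend]
  have hsuf' : List.replicate m true <:+ w' := by
    refine ⟨t.drop (k + 1), ?_⟩
    rw [hw'eq, ← ht, List.drop_append,
      show k + 1 - t.length = 0 by omega, List.drop_zero]
  have hocc' : ∀ u v, w' = u ++ List.replicate m true ++ v → v = [] := by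
    intro u v h
    refine hocc (List.replicate k true ++ false :: u) v ?_
    rw [hsplit, h]
    simp
  refine ⟨k, hkm, w', ⟨⟨hsuf', hocc'⟩, by omega⟩, hsplit⟩

/-- reverse direction -/
lemma mem_comp {m n k : ℕ} (hk : k < m) {w' : List Bool} (hw' : w' ∈ C m (m + n - k)) :
    List.replicate k true ++ false :: w' ∈ C m (m + n + 1) := by
  obtain ⟨⟨hsuf, hocc⟩, hlen⟩ := hw'
  have hwlen : m ≤ w'.length := by
    have := hsuf.length_le
    simpa using this
  constructor
  · constructor
    · exact hsuf.trans ⟨List.replicate k true ++ [false], by simp⟩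
    · intro u v h
      rcases le_or_gt (u.length) k with hle | hlt
      · exfalso
        have hklt : (List.replicate k true ++ false :: w').length > k := by simp
        have h1 : (List.replicate k true ++ false :: w')[k]'hklt = false := by
          rw [List.getElem_append_right (by simp)]
          simp
        have h2 : (List.replicate k true ++ false :: w')[k]'hklt = true := by
          rw [List.getElem_of_eq (h.symm ▸ List.append_assoc u _ v :
            List.replicate k true ++ false :: w' = u ++ (List.replicate m true ++ v))]
          rw [List.getElem_append_right (by omega)]
          rw [List.getElem_append_left (by simp; omega)]
          simp
        rw [h1] at h2
        exact Bool.false_ne_true h2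
      · have hdrop : w' = u.drop (k + 1) ++ List.replicate m true ++ v := by
          have : w' = (List.replicate k true ++ false :: w').drop (k + 1) := by
            rw [drop_prepend]
          rw [this]
          conv_lhs => rw [h]
          rw [List.append_assoc, List.drop_append,
            show k + 1 - u.length = 0 by omega, List.drop_zero, List.append_assoc]
        exact hocc _ _ hdrop
  · simp only [List.length_append, List.length_replicate, List.length_cons]
    omega

lemma C_succ {m : ℕ} (hm : 1 ≤ m) (n : ℕ) :
    C m (m + n + 1) =
      ⋃ k ∈ Finset.range m,
        (fun w' => List.replicate k true ++ false :: w') '' C m (m + n - k) := by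
  ext w
  simp only [Set.mem_iUnion, Finset.mem_range, Set.mem_image, exists_prop]
  constructor
  · intro hw
    obtain ⟨k, hk, w', hw', heq⟩ := mem_decomp hm hw
    exact ⟨k, hk, w', hw', heq.symm⟩
  · rintro ⟨k, hk, w', hw', rfl⟩
    exact mem_comp hk hw'

lemma ncard_C_succ {m : ℕ} (hm : 1 ≤ m) (n : ℕ) :
    (C m (m + n + 1)).ncard = ∑ k ∈ Finset.range m, (C m (m + n - k)).ncard := by
  classical
  set T : ℕ → Finset (List Bool) := fun k =>
    (C_finite m (m + n - k)).toFinset.image (fun w' => List.replicate k true ++ false :: w')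
    with hT
  have hset : C m (m + n + 1) = ↑((Finset.range m).biUnion T) := by
    rw [C_succ hm n]
    ext w
    simp [hT]
  rw [hset, Set.ncard_coe_finset]
  rw [Finset.card_biUnion]
  · refine Finset.sum_congr rfl fun k _ => ?_
    rw [hT]
    rw [Finset.card_image_of_injective _ (fun a b h => (prepend_inj k k a b h).2)]
    rw [Set.ncard_eq_toFinset_card _ (C_finite m (m + n - k))]
  · intro i _ j _ hij
    rw [Function.onFun, Finset.disjoint_left]
    intro w hwi hwj
    simp only [hT, Finset.mem_image] at hwi hwj
    obtain ⟨a, _, ha⟩ := hwi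
    obtain ⟨b, _, hb⟩ := hwj
    exact hij (prepend_inj i j a b (ha.trans hb.symm)).1

end FibCodeAux

open FibCodeAux in
theorem fibCode_count (m : ℕ) (hm : 1 ≤ m) (F : ℤ → ℕ)
    (hF1 : F 1 = 1)
    (hF0 : ∀ j : ℤ, -(m : ℤ) < j → j ≤ 0 → F j = 0)
    (hFrec : ∀ j : ℤ, 1 < j → F j = ∑ i ∈ Finset.range m, F (j - 1 - (i : ℤ)))
    (n : ℕ) :
    Set.ncard {w ∈ FibCode m | w.length = m + n} = F ((n : ℤ) + 1) := by
  induction n using Nat.strong_induction_on with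
  | _ n ih =>
    show (C m (m + n)).ncard = F ((n : ℤ) + 1)
    match n with
    | 0 =>
      show (C m m).ncard = F ((0 : ℤ) + 1)
      rw [C_base m]
      simp [hF1]
    | Nat.succ n =>
      rw [show m + (n + 1) = m + n + 1 by omega, ncard_C_succ hm n]
      have hrec := hFrec ((n : ℤ) + 2) (by omega)
      have hgoal : F ((↑(n + 1) : ℤ) + 1) = ∑ i ∈ Finset.range m, F ((n : ℤ) + 1 - i) := by
        push_cast
        rw [show (n : ℤ) + 1 + 1 = (n : ℤ) + 2 by ring, hrec]
        refine Finset.sum_congr rfl fun i _ => ?_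
        ring_nf
      show ∑ k ∈ Finset.range m, (C m (m + n - k)).ncard = F ((↑(n + 1) : ℤ) + 1)
      rw [hgoal]
      refine Finset.sum_congr rfl fun k hk => ?_
      rw [Finset.mem_range] at hk
      rcases le_or_gt k n with hle | hlt
      · have h2 : (C m (m + (n - k))).ncard = F (((n - k : ℕ) : ℤ) + 1) :=
          ih (n - k) (by omega)
        rw [show m + n - k = m + (n - k) by omega, h2,
          show ((n - k : ℕ) : ℤ) + 1 = (n : ℤ) + 1 - k by
            push_cast [hle]; ring]
      · rw [C_empty (show m + n - k < m by omega), Set.ncard_empty,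
          hF0 ((n : ℤ) + 1 - k) (by push_cast; omega) (by push_cast; omega)]
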